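/- Let f : [a,b] → ℝ be differentiable with |f'| ≤ M on (a,b), and let h : [a,b] → ℝ be differentiable. Taking α = x−a and β = b−x for fixed x with a < x < b, the weighted perturbed inequality specializes to: |((h(b)-h(a))/(b-a))f(x) - ((γ+Γ)/2)·(1/(b-a))[∫_a^x (h(t)-h(a))dt - ∫_x^b (h(b)-h(t))dt] - (1/(b-a))∫_a^b h'(t)f(t)dt| ≤ ((Γ-γ)/2)·(1/(b-a))·[∫_a^x |h(t)-h(a)|dt + ∫_x^b |h(b)-h(t)|dt], whenever γ ≤ f'(t) ≤ Γ on [a,b]. -/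

import Mathlib

open MeasureTheory intervalIntegral

theorem weighted_perturbed_ostrowski_special_weights
    (a b x γ Γ : ℝ) (f h f' h' : ℝ → ℝ)
    (hab : a < b) (hx : x ∈ Set.Ioo a b)
    (hf : ∀ t ∈ Set.Icc a b, HasDerivAt f (f' t) t)
    (hh : ∀ t ∈ Set.Icc a b, HasDerivAt h (h' t) t)
    (hf'int : IntervalIntegrable f' volume a b)
    (hh'int : IntervalIntegrable h' volume a b)
    (hbound : ∀ t ∈ Set.Icc a b, γ ≤ f' t ∧ f' t ≤ Γ) :
    |(h b - h a) / (b - a) * f x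
      - (γ + Γ) / 2 * (1 / (b - a)) *
          ((∫ t in a..x, h t - h a) - ∫ t in x..b, h b - h t)
      - (1 / (b - a)) * ∫ t in a..b, h' t * f t|
      ≤ (Γ - γ) / 2 * (1 / (b - a)) *
          ((∫ t in a..x, |h t - h a|) + ∫ t in x..b, |h b - h t|) := by
  obtain ⟨hax, hxb⟩ := hx
  have hax' : a ≤ x := hax.le
  have hxb' : x ≤ b := hxb.le
  have hba : (0:ℝ) < b - a := by linarith
  set c := (γ + Γ) / 2 with hc
  set M := (Γ - γ) / 2 with hM
  have hsub1 : Set.uIcc a x ⊆ Set.uIcc a b := by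
    rw [Set.uIcc_of_le hax', Set.uIcc_of_le hab.le]
    exact Set.Icc_subset_Icc le_rfl hxb'
  have hsub2 : Set.uIcc x b ⊆ Set.uIcc a b := by
    rw [Set.uIcc_of_le hxb', Set.uIcc_of_le hab.le]
    exact Set.Icc_subset_Icc hax' le_rfl
  have hIcc1 : Set.Icc a x ⊆ Set.Icc a b := Set.Icc_subset_Icc le_rfl hxb'
  have hIcc2 : Set.Icc x b ⊆ Set.Icc a b := Set.Icc_subset_Icc hax' le_rfl
  have hfc : ContinuousOn f (Set.Icc a b) :=
    fun t ht => (hf t ht).continuousAt.continuousWithinAt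
  have hhc : ContinuousOn h (Set.Icc a b) :=
    fun t ht => (hh t ht).continuousAt.continuousWithinAt
  have huab : Set.uIcc a b = Set.Icc a b := Set.uIcc_of_le hab.le
  -- integrability pieces
  have hg1c : ContinuousOn (fun t => h t - h a) (Set.uIcc a x) :=
    ((hhc.mono (huab ▸ hsub1)).sub continuousOn_const)
  have hg2c : ContinuousOn (fun t => h b - h t) (Set.uIcc x b) :=
    (continuousOn_const.sub (hhc.mono (huab ▸ hsub2)))
  have hf'1 : IntervalIntegrable f' volume a x := hf'int.mono_set hsub1
  have hf'2 : IntervalIntegrable f' volume x b := hf'int.mono_set hsub2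
  have hg1int : IntervalIntegrable (fun t => h t - h a) volume a x :=
    hg1c.intervalIntegrable
  have hg2int : IntervalIntegrable (fun t => h b - h t) volume x b :=
    hg2c.intervalIntegrable
  have hg1f' : IntervalIntegrable (fun t => (h t - h a) * f' t) volume a x :=
    hf'1.continuousOn_mul hg1c
  have hg2f' : IntervalIntegrable (fun t => (h b - h t) * f' t) volume x b :=
    hf'2.continuousOn_mul hg2c
  have hh'f : IntervalIntegrable (fun t => h' t * f t) volume a b :=
    hh'int.mul_continuousOn (huab ▸ hfc)
  have hh'f1 : IntervalIntegrable (fun t => h' t * f t) volume a x := hh'f.mono_set hsub1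
  have hh'f2 : IntervalIntegrable (fun t => h' t * f t) volume x b := hh'f.mono_set hsub2
  -- integration by parts on [a,x]
  have ibp1 : (∫ t in a..x, (h t - h a) * f' t)
      = (h x - h a) * f x - ∫ t in a..x, h' t * f t := by
    have key : (∫ t in a..x, (h' t * f t + (h t - h a) * f' t))
        = (h x - h a) * f x - (h a - h a) * f a := by
      apply intervalIntegral.integral_eq_sub_of_hasDerivAt
      · intro t ht
        have ht' : t ∈ Set.Icc a b := hIcc1 (by rwa [Set.uIcc_of_le hax'] at ht)
        exact ((hh t ht').sub_const (h a)).mul (hf t ht')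
      · exact hh'f1.add hg1f'
    rw [intervalIntegral.integral_add hh'f1 hg1f'] at key
    have : (h a - h a) * f a = 0 := by ring
    rw [this] at key
    linarith
  -- integration by parts on [x,b]
  have ibp2 : (∫ t in x..b, (h b - h t) * f' t)
      = (∫ t in x..b, h' t * f t) - (h b - h x) * f x := by
    have key : (∫ t in x..b, ((h b - h t) * f' t - h' t * f t))
        = (h b - h b) * f b - (h b - h x) * f x := by
      apply intervalIntegral.integral_eq_sub_of_hasDerivAt
        (f := fun t => (h b - h t) * f t)
        (f' := fun t => (h b - h t) * f' t - h' t * f t)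
      · intro t ht
        have ht' : t ∈ Set.Icc a b := hIcc2 (by rwa [Set.uIcc_of_le hxb'] at ht)
        have : HasDerivAt (fun t => (h b - h t) * f t) (-h' t * f t + (h b - h t) * f' t) t :=
          ((hh t ht').const_sub (h b)).mul (hf t ht')
        exact this.congr_deriv (by ring)
      · exact hg2f'.sub hh'f2
    rw [intervalIntegral.integral_sub hg2f' hh'f2] at key
    have : (h b - h b) * f b = 0 := by ring
    rw [this] at key
    linarith
  have hfc1 : IntervalIntegrable (fun t => (h t - h a) * (f' t - c)) volume a x :=
    (hf'1.sub intervalIntegrable_const).continuousOn_mul hg1c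
  have hfc2 : IntervalIntegrable (fun t => (h b - h t) * (f' t - c)) volume x b :=
    (hf'2.sub intervalIntegrable_const).continuousOn_mul hg2c
  have hsplit : (∫ t in a..x, h' t * f t) + (∫ t in x..b, h' t * f t)
      = ∫ t in a..b, h' t * f t :=
    intervalIntegral.integral_add_adjacent_intervals hh'f1 hh'f2
  -- rewrite ∫ g*(f'-c)
  have e1 : (∫ t in a..x, (h t - h a) * (f' t - c))
      = (∫ t in a..x, (h t - h a) * f' t) - c * ∫ t in a..x, (h t - h a) := by
    have : ∀ t, (h t - h a) * (f' t - c) = (h t - h a) * f' t - c * (h t - h a) := by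
      intro t; ring
    simp_rw [this]
    rw [intervalIntegral.integral_sub hg1f' (hg1int.const_mul c),
      intervalIntegral.integral_const_mul]
  have e2 : (∫ t in x..b, (h b - h t) * (f' t - c))
      = (∫ t in x..b, (h b - h t) * f' t) - c * ∫ t in x..b, (h b - h t) := by
    have : ∀ t, (h b - h t) * (f' t - c) = (h b - h t) * f' t - c * (h b - h t) := by
      intro t; ring
    simp_rw [this]
    rw [intervalIntegral.integral_sub hg2f' (hg2int.const_mul c),
      intervalIntegral.integral_const_mul]
  have hexpr : (h b - h a) / (b - a) * f x
      - c * (1 / (b - a)) * ((∫ t in a..x, h t - h a) - ∫ t in x..b, h b - h t)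
      - (1 / (b - a)) * ∫ t in a..b, h' t * f t
      = (1 / (b - a)) * ((∫ t in a..x, (h t - h a) * (f' t - c))
          - ∫ t in x..b, (h b - h t) * (f' t - c)) := by
    rw [e1, e2, ibp1, ibp2, ← hsplit]
    field_simp
    ring
  -- bounds on I1, I2
  have habs : ∀ t ∈ Set.Icc a b, |f' t - c| ≤ M := by
    intro t ht
    obtain ⟨h1, h2⟩ := hbound t ht
    rw [abs_le]
    constructor <;> [skip; skip] <;> simp only [hc, hM] <;> linarith
  have bnd1 : |∫ t in a..x, (h t - h a) * (f' t - c)| ≤ M * ∫ t in a..x, |h t - h a| := by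
    calc |∫ t in a..x, (h t - h a) * (f' t - c)|
        ≤ ∫ t in a..x, |(h t - h a) * (f' t - c)| :=
          intervalIntegral.abs_integral_le_integral_abs hax'
      _ ≤ ∫ t in a..x, |h t - h a| * M := by
          apply intervalIntegral.integral_mono_on hax'
            hfc1.abs ((hg1int.abs).mul_const M)
          intro t ht
          rw [abs_mul]
          exact mul_le_mul_of_nonneg_left (habs t (hIcc1 ht)) (abs_nonneg _)
      _ = M * ∫ t in a..x, |h t - h a| := by
          rw [intervalIntegral.integral_mul_const]; ring
  have bnd2 : |∫ t in x..b, (h b - h t) * (f' t - c)| ≤ M * ∫ t in x..b, |h b - h t| := by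
    calc |∫ t in x..b, (h b - h t) * (f' t - c)|
        ≤ ∫ t in x..b, |(h b - h t) * (f' t - c)| :=
          intervalIntegral.abs_integral_le_integral_abs hxb'
      _ ≤ ∫ t in x..b, |h b - h t| * M := by
          apply intervalIntegral.integral_mono_on hxb'
            hfc2.abs ((hg2int.abs).mul_const M)
          intro t ht
          rw [abs_mul]
          exact mul_le_mul_of_nonneg_left (habs t (hIcc2 ht)) (abs_nonneg _)
      _ = M * ∫ t in x..b, |h b - h t| := by
          rw [intervalIntegral.integral_mul_const]; ring
  set I1 := ∫ t in a..x, (h t - h a) * (f' t - c) with hI1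
  set I2 := ∫ t in x..b, (h b - h t) * (f' t - c) with hI2
  rw [hexpr, abs_mul, abs_of_pos (by positivity : (0:ℝ) < 1/(b-a))]
  have : |I1 - I2| ≤ M * ((∫ t in a..x, |h t - h a|) + ∫ t in x..b, |h b - h t|) := by
    calc |I1 - I2| ≤ |I1| + |I2| := abs_sub _ _
      _ ≤ M * (∫ t in a..x, |h t - h a|) + M * ∫ t in x..b, |h b - h t| :=
          add_le_add bnd1 bnd2
      _ = M * ((∫ t in a..x, |h t - h a|) + ∫ t in x..b, |h b - h t|) := by ring
  calc (1/(b-a)) * |I1 - I2|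
      ≤ (1/(b-a)) * (M * ((∫ t in a..x, |h t - h a|) + ∫ t in x..b, |h b - h t|)) :=
        mul_le_mul_of_nonneg_left this (by positivity)
    _ = M * (1/(b-a)) * ((∫ t in a..x, |h t - h a|) + ∫ t in x..b, |h b - h t|) := by ring
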